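/- The 3-dimensional left ideals of Λ are exactly the subspaces U(a,b,c) with (a,b,c) ∈ k³ \ {(0,0,0)}. They have the following structure: U(1,−1,0) = Λ(x−y) ⊕ Λzx is a direct sum of left Λ-submodules; U(0,0,1) = Λz ⊕ Λyx is a direct sum of left Λ-submodules; and if a+b ≠ 0 or ac ≠ 0, then U(a,b,c) = Λ(ax+by+cz) is a cyclic (local, hence indecomposable) left Λ-module. -/

import Mathlib

open CategoryTheory Limits Opposite

/-- The algebra `Λ = Λ(q)` of Ringel–Zhang: a `k`-algebra with distinguished elements
`x, y, z` satisfying the defining relations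
`x² = y² = z² = 0`, `yz = 0`, `xy + q·yx = 0`, `xz = zx`, `zy = zx`,
and admitting the `k`-basis `{1, x, y, z, yx, zx}`.
Any such algebra is canonically isomorphic to the quotient of the free algebra
`k⟨x,y,z⟩` by the two-sided ideal generated by these relations. -/
structure LambdaAlg (k : Type) [Field k] (q : k) (Λ : Type) [Ring Λ] [Algebra k Λ] :
    Type where
  x : Λ
  y : Λ
  z : Λ
  hxx : x * x = 0
  hyy : y * y = 0
  hzz : z * z = 0
  hyz : y * z = 0
  hxy : x * y + q • (y * x) = 0
  hxz : x * z - z * x = 0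
  hzy : z * y - z * x = 0
  basis : Module.Basis (Fin 6) k Λ
  hb0 : basis 0 = 1
  hb1 : basis 1 = x
  hb2 : basis 2 = y
  hb3 : basis 3 = z
  hb4 : basis 4 = y * x
  hb5 : basis 5 = z * x

namespace LambdaAlg

variable {k : Type} [Field k] {q : k} {Λ : Type} [Ring Λ] [Algebra k Λ]

/-- The element `ax + by + cz` of `Λ`. -/
def w (D : LambdaAlg k q Λ) (a b c : k) : Λ := a • D.x + b • D.y + c • D.z

/-- The left ideal `U(a,b,c) = Λ(ax+by+cz) + Λ·yx + Λ·zx` of `Λ`. -/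
def U (D : LambdaAlg k q Λ) (a b c : k) : Submodule Λ Λ :=
  Submodule.span Λ {D.w a b c, D.y * D.x, D.z * D.x}

/-- The left `Λ`-module `M(a,b,c) = Λ/U(a,b,c)`. -/
abbrev M (D : LambdaAlg k q Λ) (a b c : k) : Type := Λ ⧸ D.U a b c

/-- The right ideal `U′(a,b,c) = (ax+by+cz)Λ + yx·Λ + zx·Λ` of `Λ`,
viewed as a `Λᵐᵒᵖ`-submodule of `Λ`. -/
def U' (D : LambdaAlg k q Λ) (a b c : k) : Submodule Λᵐᵒᵖ Λ :=
  Submodule.span Λᵐᵒᵖ {D.w a b c, D.y * D.x, D.z * D.x}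

/-- The right `Λ`-module `M′(a,b,c) = Λ/U′(a,b,c)` (a module over `Λᵐᵒᵖ`). -/
abbrev M' (D : LambdaAlg k q Λ) (a b c : k) : Type := Λ ⧸ D.U' a b c

/-- The `k`-subspace `{m ∈ M : x·m = y·m = z·m = 0}` of a left `Λ`-module `M`;
since `x, y, z` generate `rad Λ` and every simple `Λ`-module is isomorphic to `k`,
this is the socle of `M`. -/
def ann (D : LambdaAlg k q Λ) (M : Type) [AddCommGroup M] [Module k M] [Module Λ M]
    [IsScalarTower k Λ M] : Submodule k M where
  carrier := {m | D.x • m = 0 ∧ D.y • m = 0 ∧ D.z • m = 0}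
  add_mem' := by
    rintro a b ⟨h1, h2, h3⟩ ⟨g1, g2, g3⟩
    simp [smul_add, h1, h2, h3, g1, g2, g3]
  zero_mem' := by simp
  smul_mem' := by
    rintro a m ⟨h1, h2, h3⟩
    refine ⟨?_, ?_, ?_⟩ <;> rw [smul_comm] <;> simp [h1, h2, h3]

/-- The submodule `(rad Λ)·M = x·M + y·M + z·M` of a left `Λ`-module `M`. -/
def radM (D : LambdaAlg k q Λ) (M : Type) [AddCommGroup M] [Module Λ M] :
    Submodule Λ M :=
  Submodule.span Λ
    (Set.range (fun m : M => D.x • m) ∪ Set.range (fun m : M => D.y • m) ∪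
      Set.range (fun m : M => D.z • m))

end LambdaAlg

/-- A module is indecomposable if it is nonzero and is not the direct sum of two
nonzero submodules. -/
def IsIndecomposable (R : Type) [Ring R] (M : Type) [AddCommGroup M] [Module R M] :
    Prop :=
  Nontrivial M ∧
    ∀ N₁ N₂ : Submodule R M, N₁ ⊓ N₂ = ⊥ → N₁ ⊔ N₂ = ⊤ → N₁ = ⊥ ∨ N₂ = ⊥

/-- A module is torsionless if it admits an injective linear map into a finite free
module. -/
def IsTorsionless (R : Type) [Ring R] (M : Type) [AddCommGroup M] [Module R M] : Prop :=
  ∃ (n : ℕ) (f : M →ₗ[R] (Fin n → R)), Function.Injective f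

/-- The canonical evaluation map `M → M** = Hom_{Λᵒᵖ}(Hom_Λ(M, Λ), Λ)`,
sending `m` to `f ↦ f m`. -/
def evalMap (Λ : Type) [Ring Λ] (M : Type) [AddCommGroup M] [Module Λ M] :
    M → ((M →ₗ[Λ] Λ) →ₗ[Λᵐᵒᵖ] Λ) := fun m =>
  { toFun := fun f => f m
    map_add' := fun _ _ => rfl
    map_smul' := fun _ _ => rfl }

/-- The transformation `ω′(a,b,c) = (a, q⁻¹b, −((a+q⁻¹b)/a)·c)` on triples. -/
def omegaPrime {k : Type} [Field k] (q : k) (t : k × k × k) : k × k × k :=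
  (t.1, q⁻¹ * t.2.1, -((t.1 + q⁻¹ * t.2.1) / t.1) * t.2.2)

section Aux
open Submodule


variable {k : Type} [Field k] {Λ : Type} [Ring Λ] [Algebra k Λ]

-- decomposition of membership of a triple span
lemma mem_span3 {u1 u2 u3 v : Λ} :
    v ∈ span k ({u1, u2, u3} : Set Λ) ↔ ∃ t s r : k, v = t • u1 + s • u2 + r • u3 := by
  constructor
  · intro hv
    rw [show ({u1,u2,u3} : Set Λ) = insert u1 {u2,u3} from rfl, mem_span_insert] at hv
    obtain ⟨t, v', hv', rfl⟩ := hv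
    rw [mem_span_pair] at hv'
    obtain ⟨s, r, rfl⟩ := hv'
    exact ⟨t, s, r, (add_assoc _ _ _).symm⟩
  · rintro ⟨t, s, r, rfl⟩
    exact add_mem (add_mem (smul_mem _ _ (subset_span (by simp)))
      (smul_mem _ _ (subset_span (by simp)))) (smul_mem _ _ (subset_span (by simp)))

-- a k-subspace closed under left multiplication equals restrictScalars of the Λ-span
lemma restrict_span_le (S : Set Λ) (W : Submodule k Λ) (hSW : S ⊆ W)
    (hmul : ∀ l : Λ, ∀ v ∈ W, l * v ∈ W) :
    (span Λ S).restrictScalars k ≤ W := by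
  intro v hv
  rw [restrictScalars_mem] at hv
  induction hv using span_induction with
  | mem u hu => exact hSW hu
  | zero => exact W.zero_mem
  | add _ _ _ _ h1 h2 => exact W.add_mem h1 h2
  | smul l u _ h => exact hmul l u h

lemma span_le_restrict (S : Set Λ) : span k S ≤ (span Λ S).restrictScalars k :=
  span_le.mpr fun _ h => subset_span h

lemma restrict_span_eq' (S : Set Λ) (W : Submodule k Λ) (hSW : S ⊆ W)
    (hWS : W ≤ (span Λ S).restrictScalars k)
    (hmul : ∀ l : Λ, ∀ v ∈ W, l * v ∈ W) :
    (span Λ S).restrictScalars k = W :=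
  le_antisymm (restrict_span_le S W hSW hmul) hWS

-- finrank of ↥U for a Λ-submodule equals finrank of restrictScalars
lemma finrank_restrict (U : Submodule Λ Λ) :
    Module.finrank k ↥(U.restrictScalars k) = Module.finrank k ↥U := rfl

lemma finrank_span3' (u1 u2 u3 : Λ)
    (h : ∀ t s r : k, t • u1 + s • u2 + r • u3 = 0 → t = 0 ∧ s = 0 ∧ r = 0) :
    Module.finrank k ↥(span k ({u1, u2, u3} : Set Λ)) = 3 := by
  have hr : ({u1, u2, u3} : Set Λ) = Set.range ![u1, u2, u3] := by
    simp only [Matrix.range_cons, Matrix.range_empty, Set.union_empty]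
    ext v; simp; tauto
  have hli : LinearIndependent k ![u1, u2, u3] := by
    rw [Fintype.linearIndependent_iff]
    intro g hg
    rw [Fin.sum_univ_three] at hg
    simp only [Matrix.cons_val_zero, Matrix.cons_val_one, Matrix.head_cons,
      Matrix.cons_val_two, Matrix.tail_cons] at hg
    obtain ⟨h0, h1, h2⟩ := h _ _ _ hg
    intro i; fin_cases i <;> assumption
  rw [hr, finrank_span_eq_card hli]
  simp

end Aux

namespace LambdaAlg

variable {k : Type} [Field k] {q : k} {Λ : Type} [Ring Λ] [Algebra k Λ]
variable (D : LambdaAlg k q Λ)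

lemma hxy' : D.x * D.y = -(q • (D.y * D.x)) := eq_neg_of_add_eq_zero_left D.hxy
lemma hxz' : D.x * D.z = D.z * D.x := sub_eq_zero.mp D.hxz
lemma hzy' : D.z * D.y = D.z * D.x := sub_eq_zero.mp D.hzy

lemma x_yx : D.x * (D.y * D.x) = 0 := by
  rw [← mul_assoc, D.hxy', neg_mul, smul_mul_assoc, mul_assoc, D.hxx, mul_zero, smul_zero, neg_zero]
lemma y_yx : D.y * (D.y * D.x) = 0 := by rw [← mul_assoc, D.hyy, zero_mul]
lemma z_yx : D.z * (D.y * D.x) = 0 := by rw [← mul_assoc, D.hzy', mul_assoc, D.hxx, mul_zero]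
lemma x_zx : D.x * (D.z * D.x) = 0 := by rw [← mul_assoc, D.hxz', mul_assoc, D.hxx, mul_zero]
lemma y_zx : D.y * (D.z * D.x) = 0 := by rw [← mul_assoc, D.hyz, zero_mul]
lemma z_zx : D.z * (D.z * D.x) = 0 := by rw [← mul_assoc, D.hzz, zero_mul]
lemma yx_x : (D.y * D.x) * D.x = 0 := by rw [mul_assoc, D.hxx, mul_zero]
lemma yx_y : (D.y * D.x) * D.y = 0 := by
  rw [mul_assoc, D.hxy', mul_neg, mul_smul_comm, ← mul_assoc, D.hyy, zero_mul, smul_zero, neg_zero]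
lemma yx_z : (D.y * D.x) * D.z = 0 := by rw [mul_assoc, D.hxz', D.y_zx]
lemma zx_x : (D.z * D.x) * D.x = 0 := by rw [mul_assoc, D.hxx, mul_zero]
lemma zx_y : (D.z * D.x) * D.y = 0 := by
  rw [mul_assoc, D.hxy', mul_neg, mul_smul_comm, D.z_yx, smul_zero, neg_zero]
lemma zx_z : (D.z * D.x) * D.z = 0 := by rw [mul_assoc, D.hxz', D.z_zx]
lemma yx_yx : (D.y * D.x) * (D.y * D.x) = 0 := by rw [← mul_assoc, D.yx_y, zero_mul]
lemma yx_zx : (D.y * D.x) * (D.z * D.x) = 0 := by rw [← mul_assoc, D.yx_z, zero_mul]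
lemma zx_yx : (D.z * D.x) * (D.y * D.x) = 0 := by rw [← mul_assoc, D.zx_y, zero_mul]
lemma zx_zx : (D.z * D.x) * (D.z * D.x) = 0 := by rw [← mul_assoc, D.zx_z, zero_mul]

lemma repr_one : D.basis.repr 1 = Finsupp.single 0 1 := by rw [← D.hb0]; exact D.basis.repr_self 0
lemma repr_x : D.basis.repr D.x = Finsupp.single 1 1 := by rw [← D.hb1]; exact D.basis.repr_self 1
lemma repr_y : D.basis.repr D.y = Finsupp.single 2 1 := by rw [← D.hb2]; exact D.basis.repr_self 2
lemma repr_z : D.basis.repr D.z = Finsupp.single 3 1 := by rw [← D.hb3]; exact D.basis.repr_self 3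
lemma repr_yx : D.basis.repr (D.y * D.x) = Finsupp.single 4 1 := by
  rw [← D.hb4]; exact D.basis.repr_self 4
lemma repr_zx : D.basis.repr (D.z * D.x) = Finsupp.single 5 1 := by
  rw [← D.hb5]; exact D.basis.repr_self 5

lemma sum_repr (u : Λ) :
    (D.basis.repr u 0) • (1:Λ) + (D.basis.repr u 1) • D.x + (D.basis.repr u 2) • D.y +
      (D.basis.repr u 3) • D.z + (D.basis.repr u 4) • (D.y * D.x) +
      (D.basis.repr u 5) • (D.z * D.x) = u := by
  have := D.basis.sum_repr u
  rwa [Fin.sum_univ_six, D.hb0, D.hb1, D.hb2, D.hb3, D.hb4, D.hb5] at this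

lemma mul_expand (l u : Λ) :
    l * u = (D.basis.repr l 0 * D.basis.repr u 0) • (1:Λ)
      + (D.basis.repr l 0 * D.basis.repr u 1 + D.basis.repr l 1 * D.basis.repr u 0) • D.x
      + (D.basis.repr l 0 * D.basis.repr u 2 + D.basis.repr l 2 * D.basis.repr u 0) • D.y
      + (D.basis.repr l 0 * D.basis.repr u 3 + D.basis.repr l 3 * D.basis.repr u 0) • D.z
      + (D.basis.repr l 0 * D.basis.repr u 4 + D.basis.repr l 4 * D.basis.repr u 0
          + D.basis.repr l 2 * D.basis.repr u 1
          - q * (D.basis.repr l 1 * D.basis.repr u 2)) • (D.y * D.x)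
      + (D.basis.repr l 0 * D.basis.repr u 5 + D.basis.repr l 5 * D.basis.repr u 0
          + D.basis.repr l 1 * D.basis.repr u 3 + D.basis.repr l 3 * D.basis.repr u 1
          + D.basis.repr l 3 * D.basis.repr u 2) • (D.z * D.x) := by
  conv_lhs => rw [← D.sum_repr l, ← D.sum_repr u]
  simp only [add_mul, mul_add, smul_mul_assoc, mul_smul_comm, one_mul, mul_one,
    D.hxx, D.hyy, D.hzz, D.hyz, D.hxy', D.hxz', D.hzy', D.x_yx, D.y_yx, D.z_yx,
    D.x_zx, D.y_zx, D.z_zx, D.yx_x, D.yx_y, D.yx_z, D.zx_x, D.zx_y, D.zx_z,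
    D.yx_yx, D.yx_zx, D.zx_yx, D.zx_zx, smul_zero, add_zero, zero_add, smul_neg]
  module



end LambdaAlg
namespace LambdaAlg
open Submodule

variable {k : Type} [Field k] {q : k} {Λ : Type} [Ring Λ] [Algebra k Λ]
variable (D : LambdaAlg k q Λ)

lemma repr_w (a b c : k) : D.basis.repr (D.w a b c) =
    a • Finsupp.single 1 1 + b • Finsupp.single 2 1 + c • Finsupp.single 3 1 := by
  simp [w, D.repr_x, D.repr_y, D.repr_z]

lemma repr_w_0 (a b c : k) : D.basis.repr (D.w a b c) 0 = 0 := by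
  rw [D.repr_w]; simp (config := { decide := true }) [Finsupp.single_apply]
lemma repr_w_1 (a b c : k) : D.basis.repr (D.w a b c) 1 = a := by
  rw [D.repr_w]; simp (config := { decide := true }) [Finsupp.single_apply]
lemma repr_w_2 (a b c : k) : D.basis.repr (D.w a b c) 2 = b := by
  rw [D.repr_w]; simp (config := { decide := true }) [Finsupp.single_apply]
lemma repr_w_3 (a b c : k) : D.basis.repr (D.w a b c) 3 = c := by
  rw [D.repr_w]; simp (config := { decide := true }) [Finsupp.single_apply]
lemma repr_w_4 (a b c : k) : D.basis.repr (D.w a b c) 4 = 0 := by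
  rw [D.repr_w]; simp (config := { decide := true }) [Finsupp.single_apply]
lemma repr_w_5 (a b c : k) : D.basis.repr (D.w a b c) 5 = 0 := by
  rw [D.repr_w]; simp (config := { decide := true }) [Finsupp.single_apply]

lemma mul_w (l : Λ) (a b c : k) : l * D.w a b c =
    (D.basis.repr l 0) • D.w a b c
      + (D.basis.repr l 2 * a - q * (D.basis.repr l 1 * b)) • (D.y * D.x)
      + (D.basis.repr l 1 * c + D.basis.repr l 3 * (a + b)) • (D.z * D.x) := by
  rw [D.mul_expand l (D.w a b c)]
  simp only [D.repr_w_0, D.repr_w_1, D.repr_w_2, D.repr_w_3, D.repr_w_4, D.repr_w_5]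
  simp only [w, mul_zero, zero_add, add_zero, zero_smul, smul_zero, sub_zero]
  module

lemma mul_yx (l : Λ) : l * (D.y * D.x) = (D.basis.repr l 0) • (D.y * D.x) := by
  rw [D.mul_expand l (D.y * D.x)]
  simp (config := { decide := true }) only [D.repr_yx, Finsupp.single_apply, ite_true, ite_false]
  module

lemma mul_zx (l : Λ) : l * (D.z * D.x) = (D.basis.repr l 0) • (D.z * D.x) := by
  rw [D.mul_expand l (D.z * D.x)]
  simp (config := { decide := true }) only [D.repr_zx, Finsupp.single_apply, ite_true, ite_false]
  module

lemma y_mul_w (a b c : k) : D.y * D.w a b c = a • (D.y * D.x) := by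
  rw [D.mul_w]
  simp (config := { decide := true }) only [D.repr_y, Finsupp.single_apply, ite_true, ite_false]
  module

lemma z_mul_w (a b c : k) : D.z * D.w a b c = (a + b) • (D.z * D.x) := by
  rw [D.mul_w]
  simp (config := { decide := true }) only [D.repr_z, Finsupp.single_apply, ite_true, ite_false]
  module

lemma x_mul_w (a b c : k) : D.x * D.w a b c = -((q * b) • (D.y * D.x)) + c • (D.z * D.x) := by
  rw [D.mul_w]
  simp (config := { decide := true }) only [D.repr_x, Finsupp.single_apply, ite_true, ite_false]
  module

/-- `U(a,b,c)` as a `k`-subspace. -/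
lemma U_restrict (a b c : k) : (D.U a b c).restrictScalars k =
    span k {D.w a b c, D.y * D.x, D.z * D.x} := by
  apply restrict_span_eq' _ _ subset_span (span_le_restrict _)
  intro l v hv
  rw [mem_span3] at hv ⊢
  obtain ⟨t, s, r, rfl⟩ := hv
  refine ⟨t * D.basis.repr l 0,
    t * (D.basis.repr l 2 * a - q * (D.basis.repr l 1 * b)) + s * D.basis.repr l 0,
    t * (D.basis.repr l 1 * c + D.basis.repr l 3 * (a + b)) + r * D.basis.repr l 0, ?_⟩
  simp only [mul_add, mul_smul_comm, D.mul_w, D.mul_yx, D.mul_zx]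
  module

lemma w110 : D.w 1 (-1) 0 = D.x - D.y := by simp [w]; module
lemma w001 : D.w 0 0 1 = D.z := by simp [w]

lemma spanxy_restrict : (span Λ {D.x - D.y}).restrictScalars k =
    span k {D.x - D.y, D.y * D.x} := by
  refine restrict_span_eq' _ (span k ({D.x - D.y, D.y * D.x} : Set Λ)) ?_ ?_ ?_
  · intro v hv
    rw [Set.mem_singleton_iff] at hv; subst hv
    exact subset_span (Or.inl rfl)
  · rw [span_le]; rintro v (rfl | rfl)
    · exact subset_span rfl
    · show D.y * D.x ∈ span Λ {D.x - D.y}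
      have : D.y • (D.x - D.y) ∈ span Λ {D.x - D.y} := smul_mem _ _ (subset_span rfl)
      rwa [smul_eq_mul, mul_sub, D.hyy, sub_zero] at this
  · intro l v hv
    rw [mem_span_pair] at hv ⊢
    obtain ⟨t, s, rfl⟩ := hv
    refine ⟨t * D.basis.repr l 0,
      t * (D.basis.repr l 2 + q * D.basis.repr l 1) + s * D.basis.repr l 0, ?_⟩
    have hw : l * (D.x - D.y) = (D.basis.repr l 0) • (D.x - D.y)
        + (D.basis.repr l 2 + q * D.basis.repr l 1) • (D.y * D.x) := by
      have := D.mul_w l 1 (-1) 0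
      rw [D.w110] at this
      rw [this]; ring_nf; module
    simp only [mul_add, mul_smul_comm, hw, D.mul_yx]
    module

lemma spanz_restrict : (span Λ {D.z}).restrictScalars k = span k {D.z, D.z * D.x} := by
  refine restrict_span_eq' _ (span k ({D.z, D.z * D.x} : Set Λ)) ?_ ?_ ?_
  · intro v hv
    rw [Set.mem_singleton_iff] at hv; subst hv
    exact subset_span (Or.inl rfl)
  · rw [span_le]; rintro v (rfl | rfl)
    · exact subset_span rfl
    · show D.z * D.x ∈ span Λ {D.z}
      have : D.x • D.z ∈ span Λ {D.z} := smul_mem _ _ (subset_span rfl)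
      rwa [smul_eq_mul, D.hxz'] at this
  · intro l v hv
    rw [mem_span_pair] at hv ⊢
    obtain ⟨t, s, rfl⟩ := hv
    refine ⟨t * D.basis.repr l 0, t * D.basis.repr l 1 + s * D.basis.repr l 0, ?_⟩
    have hw : l * D.z = (D.basis.repr l 0) • D.z + (D.basis.repr l 1) • (D.z * D.x) := by
      have := D.mul_w l 0 0 1
      rw [D.w001] at this
      rw [this]; ring_nf; module
    simp only [mul_add, mul_smul_comm, hw, D.mul_zx]
    module

lemma spanyx_restrict : (span Λ {D.y * D.x}).restrictScalars k = span k {D.y * D.x} := by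
  apply restrict_span_eq' _ _ (by intro v hv; exact subset_span hv) (span_le_restrict _)
  intro l v hv
  rw [mem_span_singleton] at hv ⊢
  obtain ⟨t, rfl⟩ := hv
  exact ⟨t * D.basis.repr l 0, by rw [mul_smul_comm, D.mul_yx]; module⟩

lemma spanzx_restrict : (span Λ {D.z * D.x}).restrictScalars k = span k {D.z * D.x} := by
  apply restrict_span_eq' _ _ (by intro v hv; exact subset_span hv) (span_le_restrict _)
  intro l v hv
  rw [mem_span_singleton] at hv ⊢
  obtain ⟨t, rfl⟩ := hv
  exact ⟨t * D.basis.repr l 0, by rw [mul_smul_comm, D.mul_zx]; module⟩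

end LambdaAlg
section Aux2
open Submodule
variable {k : Type} [Field k] {Λ : Type} [Ring Λ] [Algebra k Λ]

lemma finrank_span2_le (u1 u2 : Λ) :
    Module.finrank k ↥(span k ({u1, u2} : Set Λ)) ≤ 2 := by
  classical
  refine (finrank_span_le_card _).trans ?_
  rw [Set.toFinset_insert, Set.toFinset_singleton]
  exact (Finset.card_insert_le _ _).trans (by simp)

end Aux2

namespace LambdaAlg
open Submodule

variable {k : Type} [Field k] {q : k} {Λ : Type} [Ring Λ] [Algebra k Λ]
variable (D : LambdaAlg k q Λ)

lemma finiteDim (D : LambdaAlg k q Λ) : FiniteDimensional k Λ := Module.Finite.of_basis D.basis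

lemma finrank_Lambda (D : LambdaAlg k q Λ) : Module.finrank k Λ = 6 := by
  rw [Module.finrank_eq_card_basis D.basis, Fintype.card_fin]

/-- Extract coordinates from a vanishing combination `t•w + s•yx + r•zx = 0`. -/
lemma combo_coords {t s r a b c : k}
    (h : t • D.w a b c + s • (D.y * D.x) + r • (D.z * D.x) = 0) :
    t * a = 0 ∧ t * b = 0 ∧ t * c = 0 ∧ s = 0 ∧ r = 0 := by
  have key : ∀ i : Fin 6, t * D.basis.repr (D.w a b c) i
      + s * (Finsupp.single (4:Fin 6) (1:k)) i + r * (Finsupp.single (5:Fin 6) (1:k)) i = 0 := by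
    intro i
    have := congrArg (fun v => D.basis.repr v i) h
    simpa [D.repr_yx, D.repr_zx, Finsupp.single_apply] using this
  have h1 := key 1; have h2 := key 2; have h3 := key 3; have h4 := key 4; have h5 := key 5
  rw [D.repr_w_1] at h1; rw [D.repr_w_2] at h2; rw [D.repr_w_3] at h3
  rw [D.repr_w_4] at h4; rw [D.repr_w_5] at h5
  simp (config := { decide := true }) only [Finsupp.single_apply, ite_true, ite_false,
    mul_zero, mul_one, add_zero, zero_add] at h1 h2 h3 h4 h5
  exact ⟨h1, h2, h3, h4, h5⟩

lemma finrank_wspan {a b c : k} (h : ¬(a = 0 ∧ b = 0 ∧ c = 0)) :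
    Module.finrank k ↥(span k ({D.w a b c, D.y * D.x, D.z * D.x} : Set Λ)) = 3 := by
  apply finrank_span3'
  intro t s r heq
  obtain ⟨h1, h2, h3, h4, h5⟩ := D.combo_coords heq
  refine ⟨?_, h4, h5⟩
  by_contra ht
  exact h ⟨(mul_eq_zero.mp h1).resolve_left ht, (mul_eq_zero.mp h2).resolve_left ht,
    (mul_eq_zero.mp h3).resolve_left ht⟩

/-- Any element with vanishing coordinate 0 decomposes. -/
lemma decomp_rad (u : Λ) (h0 : D.basis.repr u 0 = 0) :
    u = D.w (D.basis.repr u 1) (D.basis.repr u 2) (D.basis.repr u 3)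
      + (D.basis.repr u 4) • (D.y * D.x) + (D.basis.repr u 5) • (D.z * D.x) := by
  nth_rewrite 1 [← D.sum_repr u]
  rw [h0, w]
  module

lemma repr_sq (s : Λ) (h0 : D.basis.repr s 0 = 0) :
    D.basis.repr (s * s) 0 = 0 ∧ D.basis.repr (s * s) 1 = 0 ∧
      D.basis.repr (s * s) 2 = 0 ∧ D.basis.repr (s * s) 3 = 0 := by
  rw [D.mul_expand s s, h0]
  refine ⟨?_, ?_, ?_, ?_⟩ <;>
    simp (config := { decide := true })
      [D.repr_one, D.repr_x, D.repr_y, D.repr_z, D.repr_yx, D.repr_zx, Finsupp.single_apply]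

lemma cube_eq_zero (s : Λ) (h0 : D.basis.repr s 0 = 0) : s * (s * s) = 0 := by
  obtain ⟨g0, g1, g2, g3⟩ := D.repr_sq s h0
  rw [D.mul_expand s (s * s), h0, g0, g1, g2, g3]
  simp

lemma eq_top_of_repr0_ne (U : Submodule Λ Λ) (u : Λ) (hu : u ∈ U)
    (h0 : D.basis.repr u 0 ≠ 0) : U = ⊤ := by
  set b0 := D.basis.repr u 0 with hb0def
  set u' := b0⁻¹ • u with hu'
  set s := u' - 1 with hs
  have hs0 : D.basis.repr s 0 = 0 := by
    rw [hs, map_sub, D.repr_one, hu', map_smul]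
    simp (config := { decide := true }) [Finsupp.single_apply, smul_eq_mul, ← hb0def,
      inv_mul_cancel₀ h0]
  have hcube : s * (s * s) = 0 := D.cube_eq_zero s hs0
  have hinv : (1 - s + s * s) * u' = 1 := by
    have hu1 : u' = 1 + s := by rw [hs]; abel
    rw [hu1]
    have : (1 - s + s * s) * (1 + s) = 1 + s * (s * s) := by noncomm_ring
    rw [this, hcube, add_zero]
  have h1 : (1 : Λ) ∈ U := by
    have hm : ((b0⁻¹ • (1 - s + s * s)) • u : Λ) ∈ U := U.smul_mem _ hu
    rwa [smul_eq_mul, smul_mul_assoc,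
      show b0⁻¹ • ((1 - s + s * s) * u) = 1 by rw [← mul_smul_comm, ← hu', hinv]] at hm
  rw [Submodule.eq_top_iff']
  intro v
  have := U.smul_mem v h1
  rwa [smul_eq_mul, mul_one] at this

end LambdaAlg
namespace LambdaAlg
open Submodule

variable {k : Type} [Field k] {q : k} {Λ : Type} [Ring Λ] [Algebra k Λ]
variable (D : LambdaAlg k q Λ)

lemma finrank_U {a b c : k} (h : ¬(a = 0 ∧ b = 0 ∧ c = 0)) :
    Module.finrank k ↥(D.U a b c) = 3 := by
  rw [← finrank_restrict (D.U a b c), D.U_restrict]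
  exact D.finrank_wspan h

lemma inf_bot_1 : span Λ {D.x - D.y} ⊓ span Λ {D.z * D.x} = ⊥ := by
  rw [eq_bot_iff]
  rintro v ⟨h1, h2⟩
  have h1' : v ∈ span k {D.x - D.y, D.y * D.x} := by
    rw [← D.spanxy_restrict]; exact h1
  have h2' : v ∈ span k ({D.z * D.x} : Set Λ) := by
    rw [← D.spanzx_restrict]; exact h2
  rw [mem_span_pair] at h1'
  rw [mem_span_singleton] at h2'
  obtain ⟨t, s, hts⟩ := h1'
  obtain ⟨r, hr⟩ := h2'
  have h0 : t • D.w 1 (-1) 0 + s • (D.y * D.x) + (-r) • (D.z * D.x) = 0 := by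
    calc t • D.w 1 (-1) 0 + s • (D.y * D.x) + (-r) • (D.z * D.x)
        = (t • (D.x - D.y) + s • (D.y * D.x)) - r • (D.z * D.x) := by rw [D.w110]; module
      _ = v - v := by rw [hts, hr]
      _ = 0 := sub_self v
  obtain ⟨-, -, -, -, hr0⟩ := D.combo_coords h0
  rw [Submodule.mem_bot, ← hr, show r = 0 by simpa using hr0.symm ▸ (neg_eq_zero.mp hr0),
    zero_smul]

lemma sup_1 : span Λ {D.x - D.y} ⊔ span Λ {D.z * D.x} = D.U 1 (-1) 0 := by
  rw [← Submodule.span_union, Set.singleton_union, U, D.w110]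
  apply le_antisymm
  · apply span_mono
    rintro v (rfl | rfl)
    · exact Or.inl rfl
    · exact Or.inr (Or.inr rfl)
  · rw [span_le]
    rintro v (rfl | rfl | rfl)
    · exact subset_span (Or.inl rfl)
    · have : D.y • (D.x - D.y) ∈ span Λ ({D.x - D.y, D.z * D.x} : Set Λ) :=
        smul_mem _ _ (subset_span (Or.inl rfl))
      rwa [smul_eq_mul, mul_sub, D.hyy, sub_zero] at this
    · exact subset_span (Or.inr rfl)

lemma inf_bot_2 : span Λ {D.z} ⊓ span Λ {D.y * D.x} = ⊥ := by
  rw [eq_bot_iff]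
  rintro v ⟨h1, h2⟩
  have h1' : v ∈ span k {D.z, D.z * D.x} := by rw [← D.spanz_restrict]; exact h1
  have h2' : v ∈ span k ({D.y * D.x} : Set Λ) := by rw [← D.spanyx_restrict]; exact h2
  rw [mem_span_pair] at h1'
  rw [mem_span_singleton] at h2'
  obtain ⟨t, s, hts⟩ := h1'
  obtain ⟨r, hr⟩ := h2'
  have h0 : t • D.w 0 0 1 + (-r) • (D.y * D.x) + s • (D.z * D.x) = 0 := by
    calc t • D.w 0 0 1 + (-r) • (D.y * D.x) + s • (D.z * D.x)
        = (t • D.z + s • (D.z * D.x)) - r • (D.y * D.x) := by rw [D.w001]; module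
      _ = v - v := by rw [hts, hr]
      _ = 0 := sub_self v
  obtain ⟨-, -, -, hr0, -⟩ := D.combo_coords h0
  rw [Submodule.mem_bot, ← hr, neg_eq_zero.mp hr0, zero_smul]

lemma sup_2 : span Λ {D.z} ⊔ span Λ {D.y * D.x} = D.U 0 0 1 := by
  rw [← Submodule.span_union, Set.singleton_union, U, D.w001]
  apply le_antisymm
  · apply span_mono
    rintro v (rfl | rfl)
    · exact Or.inl rfl
    · exact Or.inr (Or.inl rfl)
  · rw [span_le]
    rintro v (rfl | rfl | rfl)
    · exact subset_span (Or.inl rfl)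
    · exact subset_span (Or.inr rfl)
    · have : D.x • D.z ∈ span Λ ({D.z, D.y * D.x} : Set Λ) :=
        smul_mem _ _ (subset_span (Or.inl rfl))
      rwa [smul_eq_mul, D.hxz'] at this

lemma yx_zx_mem_spanw (hq : q ≠ 0) {a b c : k} (hcond : a + b ≠ 0 ∨ a * c ≠ 0) :
    D.y * D.x ∈ span Λ ({D.w a b c} : Set Λ) ∧
      D.z * D.x ∈ span Λ ({D.w a b c} : Set Λ) := by
  set V := span Λ ({D.w a b c} : Set Λ) with hV
  have hwmem : D.w a b c ∈ V := subset_span rfl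
  have hy : a • (D.y * D.x) ∈ V := by
    have := V.smul_mem D.y hwmem; rwa [smul_eq_mul, D.y_mul_w] at this
  have hz : (a + b) • (D.z * D.x) ∈ V := by
    have := V.smul_mem D.z hwmem; rwa [smul_eq_mul, D.z_mul_w] at this
  have hx : -((q * b) • (D.y * D.x)) + c • (D.z * D.x) ∈ V := by
    have := V.smul_mem D.x hwmem; rwa [smul_eq_mul, D.x_mul_w] at this
  have hzx : D.z * D.x ∈ V := by
    rcases hcond with hab | hac
    · have := V.smul_of_tower_mem (a + b)⁻¹ hz
      rwa [smul_smul, inv_mul_cancel₀ hab, one_smul] at this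
    · have ha : a ≠ 0 := fun h => hac (by rw [h, zero_mul])
      have hc : c ≠ 0 := fun h => hac (by rw [h, mul_zero])
      have hyx : D.y * D.x ∈ V := by
        have := V.smul_of_tower_mem a⁻¹ hy
        rwa [smul_smul, inv_mul_cancel₀ ha, one_smul] at this
      have h1 : c • (D.z * D.x) ∈ V := by
        have := V.add_mem hx (V.smul_of_tower_mem (q * b) hyx)
        rwa [neg_add_cancel_comm] at this
      have := V.smul_of_tower_mem c⁻¹ h1
      rwa [smul_smul, inv_mul_cancel₀ hc, one_smul] at this
  refine ⟨?_, hzx⟩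
  by_cases ha : a = 0
  · have hab : a + b ≠ 0 := by
      rcases hcond with h | h
      · exact h
      · exact absurd (by rw [ha, zero_mul]) h
    have hb : b ≠ 0 := by rwa [ha, zero_add] at hab
    have h1 : -((q * b) • (D.y * D.x)) ∈ V := by
      have := V.sub_mem hx (V.smul_of_tower_mem c hzx)
      rwa [add_sub_cancel_right] at this
    have h2 : -(D.y * D.x) ∈ V := by
      have := V.smul_of_tower_mem (q * b)⁻¹ h1
      rwa [smul_neg, smul_smul, inv_mul_cancel₀ (mul_ne_zero hq hb), one_smul] at this
    simpa using V.neg_mem h2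
  · have := V.smul_of_tower_mem a⁻¹ hy
    rwa [smul_smul, inv_mul_cancel₀ ha, one_smul] at this

lemma U_cyclic (hq : q ≠ 0) {a b c : k} (hcond : a + b ≠ 0 ∨ a * c ≠ 0) :
    D.U a b c = span Λ {D.w a b c} := by
  obtain ⟨hyx, hzx⟩ := D.yx_zx_mem_spanw hq hcond
  apply le_antisymm
  · rw [U, span_le]
    rintro v (rfl | rfl | rfl)
    · exact subset_span rfl
    · exact hyx
    · exact hzx
  · exact span_mono (by intro v hv; exact Or.inl hv)

end LambdaAlg
section Aux3
open Submodule

variable {k : Type} [Field k] {Λ : Type} [Ring Λ] [Algebra k Λ]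

/-- Key scalar manipulation: from the three products of `x,y,z` with a generator,
recover `Y` and `Z` (thought of as `yx`, `zx`) in a `Λ`-submodule. -/
lemma mem_of_combo {M : Type} [AddCommGroup M] [Module k M] [Module Λ M]
    [IsScalarTower k Λ M] (W : Submodule Λ M) {qv a b c : k} (hqv : qv ≠ 0)
    (hcond : a + b ≠ 0 ∨ a * c ≠ 0) {Y Z : M}
    (hy : a • Y ∈ W) (hz : (a + b) • Z ∈ W) (hx : -((qv * b) • Y) + c • Z ∈ W) :
    Y ∈ W ∧ Z ∈ W := by
  have hzx : Z ∈ W := by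
    rcases hcond with hab | hac
    · have := W.smul_of_tower_mem (a + b)⁻¹ hz
      rwa [smul_smul, inv_mul_cancel₀ hab, one_smul] at this
    · have ha : a ≠ 0 := fun h => hac (by rw [h, zero_mul])
      have hc : c ≠ 0 := fun h => hac (by rw [h, mul_zero])
      have hyx : Y ∈ W := by
        have := W.smul_of_tower_mem a⁻¹ hy
        rwa [smul_smul, inv_mul_cancel₀ ha, one_smul] at this
      have h1 : c • Z ∈ W := by
        have := W.add_mem hx (W.smul_of_tower_mem (qv * b) hyx)
        rwa [neg_add_cancel_comm] at this
      have := W.smul_of_tower_mem c⁻¹ h1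
      rwa [smul_smul, inv_mul_cancel₀ hc, one_smul] at this
  refine ⟨?_, hzx⟩
  by_cases ha : a = 0
  · have hab : a + b ≠ 0 := by
      rcases hcond with h | h
      · exact h
      · exact absurd (by rw [ha, zero_mul]) h
    have hb : b ≠ 0 := by rwa [ha, zero_add] at hab
    have h1 : -((qv * b) • Y) ∈ W := by
      have := W.sub_mem hx (W.smul_of_tower_mem c hzx)
      rwa [add_sub_cancel_right] at this
    have h2 : -Y ∈ W := by
      have := W.smul_of_tower_mem (qv * b)⁻¹ h1
      rwa [smul_neg, smul_smul, inv_mul_cancel₀ (mul_ne_zero hqv hb), one_smul] at this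
    simpa using W.neg_mem h2
  · have := W.smul_of_tower_mem a⁻¹ hy
    rwa [smul_smul, inv_mul_cancel₀ ha, one_smul] at this

end Aux3

namespace LambdaAlg
open Submodule

variable {k : Type} [Field k] {q : k} {Λ : Type} [Ring Λ] [Algebra k Λ]
variable (D : LambdaAlg k q Λ)

lemma y_mul_decomp (a b c s r : k) :
    D.y * (D.w a b c + s • (D.y * D.x) + r • (D.z * D.x)) = a • (D.y * D.x) := by
  rw [mul_add, mul_add, mul_smul_comm, mul_smul_comm, D.y_mul_w, D.y_yx, D.y_zx]
  simp

lemma z_mul_decomp (a b c s r : k) :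
    D.z * (D.w a b c + s • (D.y * D.x) + r • (D.z * D.x)) = (a + b) • (D.z * D.x) := by
  rw [mul_add, mul_add, mul_smul_comm, mul_smul_comm, D.z_mul_w, D.z_yx, D.z_zx]
  simp

lemma x_mul_decomp (a b c s r : k) :
    D.x * (D.w a b c + s • (D.y * D.x) + r • (D.z * D.x)) =
      -((q * b) • (D.y * D.x)) + c • (D.z * D.x) := by
  rw [mul_add, mul_add, mul_smul_comm, mul_smul_comm, D.x_mul_w, D.x_yx, D.x_zx]
  simp

lemma w_smul (a b c t : k) : D.w (t * a) (t * b) (t * c) = t • D.w a b c := by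
  simp only [w, smul_add, smul_smul]

/-- Classification of 3-dimensional left ideals. -/
lemma dim3_classify (hq : q ≠ 0) (U : Submodule Λ Λ) (h : Module.finrank k ↥U = 3) :
    ∃ a b c : k, ¬(a = 0 ∧ b = 0 ∧ c = 0) ∧ U = D.U a b c := by
  haveI := D.finiteDim
  have hA : ∀ u ∈ U, D.basis.repr u 0 = 0 := by
    intro u hu; by_contra h0
    have htop := D.eq_top_of_repr0_ne U u hu h0
    rw [htop, ← finrank_restrict (⊤ : Submodule Λ Λ), Submodule.restrictScalars_top,
      finrank_top, D.finrank_Lambda] at h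
    omega
  by_cases hnd : ∃ u ∈ U, ¬(D.basis.repr u 1 + D.basis.repr u 2 = 0 ∧
      D.basis.repr u 1 * D.basis.repr u 3 = 0)
  · obtain ⟨u, hu, hu'⟩ := hnd
    set β := D.basis.repr u 1 with hβ
    set γ := D.basis.repr u 2 with hγ
    set δ := D.basis.repr u 3 with hδ
    have hcond : β + γ ≠ 0 ∨ β * δ ≠ 0 := by
      rcases not_and_or.mp hu' with h' | h' <;> [left; right] <;> exact h'
    obtain ⟨s4, hs4⟩ : ∃ s4, D.basis.repr u 4 = s4 := ⟨_, rfl⟩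
    obtain ⟨s5, hs5⟩ : ∃ s5, D.basis.repr u 5 = s5 := ⟨_, rfl⟩
    have hdecomp := D.decomp_rad u (hA u hu)
    rw [← hβ, ← hγ, ← hδ, hs4, hs5] at hdecomp
    have hy : β • (D.y * D.x) ∈ U := by
      have hm := U.smul_mem D.y hu
      rw [smul_eq_mul, hdecomp, D.y_mul_decomp] at hm
      exact hm
    have hz : (β + γ) • (D.z * D.x) ∈ U := by
      have hm := U.smul_mem D.z hu
      rw [smul_eq_mul, hdecomp, D.z_mul_decomp] at hm
      exact hm
    have hx : -((q * γ) • (D.y * D.x)) + δ • (D.z * D.x) ∈ U := by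
      have hm := U.smul_mem D.x hu
      rw [smul_eq_mul, hdecomp, D.x_mul_decomp] at hm
      exact hm
    obtain ⟨hyx, hzx⟩ := mem_of_combo U hq hcond hy hz hx
    have hwmem : D.w β γ δ ∈ U := by
      have heq : D.w β γ δ = u - s4 • (D.y * D.x) - s5 • (D.z * D.x) := by
        rw [hdecomp]; abel
      rw [heq]
      exact U.sub_mem (U.sub_mem hu (U.smul_of_tower_mem _ hyx)) (U.smul_of_tower_mem _ hzx)
    have hne : ¬(β = 0 ∧ γ = 0 ∧ δ = 0) := by
      rintro ⟨h1, h2, h3⟩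
      exact hu' (by rw [h1, h2, h3]; norm_num)
    refine ⟨β, γ, δ, hne, ?_⟩
    apply Submodule.restrictScalars_injective k Λ Λ
    rw [D.U_restrict]
    refine (Submodule.eq_of_le_of_finrank_eq ?_ ?_).symm
    · rw [span_le]
      rintro v (rfl | rfl | rfl)
      · exact hwmem
      · exact hyx
      · exact hzx
    · rw [D.finrank_wspan hne, finrank_restrict, h]
  · push_neg at hnd
    by_cases hx1 : ∃ v ∈ U, D.basis.repr v 1 ≠ 0
    · obtain ⟨v1, hv1, hv1'⟩ := hx1
      have hv13 : D.basis.repr v1 3 = 0 :=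
        (mul_eq_zero.mp (hnd v1 hv1).2).resolve_left hv1'
      have hr3 : ∀ u ∈ U, D.basis.repr u 3 = 0 := by
        intro u hu; by_contra h3
        have hu1 : D.basis.repr u 1 = 0 :=
          (mul_eq_zero.mp (hnd u hu).2).resolve_right h3
        have h13 := (hnd (v1 + u) (U.add_mem hv1 hu)).2
        rw [map_add, Finsupp.add_apply, Finsupp.add_apply, hu1, add_zero, hv13,
          zero_add] at h13
        exact h3 ((mul_eq_zero.mp h13).resolve_left hv1')
      have hle : U.restrictScalars k ≤ span k {D.w 1 (-1) 0, D.y * D.x, D.z * D.x} := by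
        intro u hu
        have h0 := hA u hu
        have h3 := hr3 u hu
        have hsum := (hnd u hu).1
        obtain ⟨c1, hc1⟩ : ∃ c1, D.basis.repr u 1 = c1 := ⟨_, rfl⟩
        obtain ⟨c2, hc2⟩ : ∃ c2, D.basis.repr u 2 = c2 := ⟨_, rfl⟩
        obtain ⟨c4, hc4⟩ : ∃ c4, D.basis.repr u 4 = c4 := ⟨_, rfl⟩
        obtain ⟨c5, hc5⟩ : ∃ c5, D.basis.repr u 5 = c5 := ⟨_, rfl⟩
        rw [hc1, hc2] at hsum
        have hd := D.decomp_rad u h0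
        rw [h3, hc1, hc2, hc4, hc5] at hd
        rw [mem_span3]
        refine ⟨c1, c4, c5, ?_⟩
        have h2eq : c2 = -c1 := eq_neg_of_add_eq_zero_right hsum
        have hwf : D.w c1 (-c1) 0 = c1 • D.w 1 (-1) 0 := by rw [← D.w_smul]; norm_num
        rw [hd, h2eq, hwf]
      have heq := Submodule.eq_of_le_of_finrank_eq hle
        (by rw [finrank_restrict, h, D.finrank_wspan (by norm_num)])
      exact ⟨1, -1, 0, by norm_num, Submodule.restrictScalars_injective k Λ Λ
        (heq.trans (D.U_restrict 1 (-1) 0).symm)⟩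
    · push_neg at hx1
      have hle : U.restrictScalars k ≤ span k {D.w 0 0 1, D.y * D.x, D.z * D.x} := by
        intro u hu
        have h0 := hA u hu
        have h1 := hx1 u hu
        have h2 : D.basis.repr u 2 = 0 := by
          have := (hnd u hu).1; rwa [h1, zero_add] at this
        obtain ⟨c3, hc3⟩ : ∃ c3, D.basis.repr u 3 = c3 := ⟨_, rfl⟩
        obtain ⟨c4, hc4⟩ : ∃ c4, D.basis.repr u 4 = c4 := ⟨_, rfl⟩
        obtain ⟨c5, hc5⟩ : ∃ c5, D.basis.repr u 5 = c5 := ⟨_, rfl⟩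
        have hd := D.decomp_rad u h0
        rw [h1, h2, hc3, hc4, hc5] at hd
        rw [mem_span3]
        refine ⟨c3, c4, c5, ?_⟩
        have hwf : D.w 0 0 c3 = c3 • D.w 0 0 1 := by rw [← D.w_smul]; norm_num
        rw [hd, hwf]
      have heq := Submodule.eq_of_le_of_finrank_eq hle
        (by rw [finrank_restrict, h, D.finrank_wspan (by norm_num)])
      exact ⟨0, 0, 1, by norm_num, Submodule.restrictScalars_injective k Λ Λ
        (heq.trans (D.U_restrict 0 0 1).symm)⟩

end LambdaAlg
namespace LambdaAlg
open Submodule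

variable {k : Type} [Field k] {q : k} {Λ : Type} [Ring Λ] [Algebra k Λ]
variable (D : LambdaAlg k q Λ)

lemma w_ne_zero {a b c : k} (habc : ¬(a = 0 ∧ b = 0 ∧ c = 0)) : D.w a b c ≠ 0 := by
  intro h
  refine habc ⟨?_, ?_, ?_⟩
  · rw [← D.repr_w_1 a b c, h]; simp
  · rw [← D.repr_w_2 a b c, h]; simp
  · rw [← D.repr_w_3 a b c, h]; simp

lemma U_indec (hq : q ≠ 0) {a b c : k} (habc : ¬(a = 0 ∧ b = 0 ∧ c = 0))
    (hcond : a + b ≠ 0 ∨ a * c ≠ 0) :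
    IsIndecomposable Λ ↥(D.U a b c) := by
  have hwU : D.w a b c ∈ D.U a b c := subset_span (Or.inl rfl)
  have hyxU : D.y * D.x ∈ D.U a b c := subset_span (Or.inr (Or.inl rfl))
  have hzxU : D.z * D.x ∈ D.U a b c := subset_span (Or.inr (Or.inr rfl))
  set wel : ↥(D.U a b c) := ⟨D.w a b c, hwU⟩ with hwel
  set yxel : ↥(D.U a b c) := ⟨D.y * D.x, hyxU⟩ with hyxel
  set zxel : ↥(D.U a b c) := ⟨D.z * D.x, hzxU⟩ with hzxel
  have hdec : ∀ m : ↥(D.U a b c), ∃ t s r : k,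
      (m : Λ) = t • D.w a b c + s • (D.y * D.x) + r • (D.z * D.x) := by
    intro m
    have hm : (m : Λ) ∈ span k {D.w a b c, D.y * D.x, D.z * D.x} := by
      rw [← D.U_restrict]; exact m.2
    exact mem_span3.mp hm
  have key : ∀ N : Submodule Λ ↥(D.U a b c),
      (∀ n ∈ N, ∃ s r : k, (n : Λ) = s • (D.y * D.x) + r • (D.z * D.x)) ∨ N = ⊤ := by
    intro N
    by_cases hP : ∀ n ∈ N, ∃ s r : k, (n : Λ) = s • (D.y * D.x) + r • (D.z * D.x)
    · exact Or.inl hP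
    right
    push_neg at hP
    obtain ⟨n, hn, hnP⟩ := hP
    obtain ⟨t, s, r, hdn⟩ := hdec n
    have ht : t ≠ 0 := by
      intro h0
      exact hnP s r (by rw [hdn, h0, zero_smul, zero_add])
    have hyn : (t * a) • yxel ∈ N := by
      have heq : (t * a) • yxel = D.y • n := by
        apply Subtype.ext
        rw [Submodule.coe_smul_of_tower, SetLike.val_smul, smul_eq_mul, hdn, mul_add, mul_add,
          mul_smul_comm, mul_smul_comm, mul_smul_comm, D.y_mul_w, D.y_yx, D.y_zx,
          smul_zero, smul_zero, add_zero, add_zero, smul_smul]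
      rw [heq]; exact N.smul_mem D.y hn
    have hzn : (t * a + t * b) • zxel ∈ N := by
      have heq : (t * a + t * b) • zxel = D.z • n := by
        apply Subtype.ext
        rw [Submodule.coe_smul_of_tower, SetLike.val_smul, smul_eq_mul, hdn, mul_add, mul_add,
          mul_smul_comm, mul_smul_comm, mul_smul_comm, D.z_mul_w, D.z_yx, D.z_zx,
          smul_zero, smul_zero, add_zero, add_zero, smul_smul, mul_add]
      rw [heq]; exact N.smul_mem D.z hn
    have hxn : -((q * (t * b)) • yxel) + (t * c) • zxel ∈ N := by
      have heq : -((q * (t * b)) • yxel) + (t * c) • zxel = D.x • n := by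
        apply Subtype.ext
        have : (D.x • n : ↥(D.U a b c)) = D.x • n := rfl
        rw [Submodule.coe_add, Submodule.coe_neg, Submodule.coe_smul_of_tower,
          Submodule.coe_smul_of_tower, SetLike.val_smul, smul_eq_mul, hdn, mul_add, mul_add,
          mul_smul_comm, mul_smul_comm, mul_smul_comm, D.x_mul_w, D.x_yx, D.x_zx,
          smul_zero, smul_zero, add_zero, add_zero]
        rw [smul_add, smul_neg, smul_smul, smul_smul]
        ring_nf
        rfl
      rw [heq]; exact N.smul_mem D.x hn
    have hcond' : t * a + t * b ≠ 0 ∨ (t * a) * (t * c) ≠ 0 := by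
      rcases hcond with h | h
      · left; rw [← mul_add]; exact mul_ne_zero ht h
      · right
        rw [show (t * a) * (t * c) = (t * t) * (a * c) by ring]
        exact mul_ne_zero (mul_ne_zero ht ht) h
    obtain ⟨hyxN, hzxN⟩ := mem_of_combo N hq hcond' hyn hzn hxn
    have hwN : wel ∈ N := by
      have heq : wel = t⁻¹ • (n - s • yxel - r • zxel) := by
        apply Subtype.ext
        rw [Submodule.coe_smul_of_tower, Submodule.coe_sub, Submodule.coe_sub,
          Submodule.coe_smul_of_tower, Submodule.coe_smul_of_tower]
        rw [show ((wel : Λ)) = D.w a b c from rfl, show ((yxel : Λ)) = D.y * D.x from rfl,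
          show ((zxel : Λ)) = D.z * D.x from rfl, hdn]
        rw [show t • D.w a b c + s • (D.y * D.x) + r • (D.z * D.x) - s • (D.y * D.x)
            - r • (D.z * D.x) = t • D.w a b c from by abel]
        rw [smul_smul, inv_mul_cancel₀ ht, one_smul]
      rw [heq]
      exact N.smul_of_tower_mem _ (N.sub_mem (N.sub_mem hn (N.smul_of_tower_mem _ hyxN))
        (N.smul_of_tower_mem _ hzxN))
    rw [Submodule.eq_top_iff']
    intro m
    obtain ⟨t', s', r', hm⟩ := hdec m
    have hmeq : m = t' • wel + s' • yxel + r' • zxel := by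
      apply Subtype.ext
      rw [Submodule.coe_add, Submodule.coe_add, Submodule.coe_smul_of_tower,
        Submodule.coe_smul_of_tower, Submodule.coe_smul_of_tower]
      exact hm
    rw [hmeq]
    exact N.add_mem (N.add_mem (N.smul_of_tower_mem _ hwN) (N.smul_of_tower_mem _ hyxN))
      (N.smul_of_tower_mem _ hzxN)
  constructor
  · exact ⟨wel, 0, fun hcontra => D.w_ne_zero habc
      (by exact congrArg Subtype.val hcontra)⟩
  intro N1 N2 hinf hsup
  rcases key N1 with hP1 | h1top
  · rcases key N2 with hP2 | h2top
    · exfalso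
      have hwmem : wel ∈ N1 ⊔ N2 := by rw [hsup]; exact mem_top
      rw [Submodule.mem_sup] at hwmem
      obtain ⟨n1, hn1, n2, hn2, hsum⟩ := hwmem
      obtain ⟨s1, r1, h1⟩ := hP1 n1 hn1
      obtain ⟨s2, r2, h2⟩ := hP2 n2 hn2
      have hw' : D.w a b c = (s1 • (D.y * D.x) + r1 • (D.z * D.x))
          + (s2 • (D.y * D.x) + r2 • (D.z * D.x)) := by
        rw [← h1, ← h2]
        exact (congrArg Subtype.val hsum).symm
      have h0 : (1 : k) • D.w a b c + (-(s1 + s2)) • (D.y * D.x)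
          + (-(r1 + r2)) • (D.z * D.x) = 0 := by
        rw [one_smul, hw']; module
      obtain ⟨e1, e2, e3, -, -⟩ := D.combo_coords h0
      rw [one_mul] at e1 e2 e3
      exact habc ⟨e1, e2, e3⟩
    · left; rw [← hinf, h2top, inf_top_eq]
  · right; rw [← hinf, h1top, top_inf_eq]

end LambdaAlg
/-- The 3-dimensional left ideals of `Λ` are exactly the `U(a,b,c)`;
`U(1,−1,0) = Λ(x−y) ⊕ Λzx`, `U(0,0,1) = Λz ⊕ Λyx`, and if `a+b ≠ 0` or `ac ≠ 0`,
then `U(a,b,c) = Λ(ax+by+cz)` is cyclic and indecomposable. -/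
theorem statement5 (k : Type) [Field k] (q : k) (hq : q ≠ 0)
    (Λ : Type) [Ring Λ] [Algebra k Λ] (D : LambdaAlg k q Λ) :
    (∀ U : Submodule Λ Λ, Module.finrank k ↥U = 3 ↔
        ∃ a b c : k, (a, b, c) ≠ (0, 0, 0) ∧ U = D.U a b c)
    ∧ (Submodule.span Λ {D.x - D.y} ⊓ Submodule.span Λ {D.z * D.x} = ⊥
       ∧ Submodule.span Λ {D.x - D.y} ⊔ Submodule.span Λ {D.z * D.x} = D.U 1 (-1) 0)
    ∧ (Submodule.span Λ {D.z} ⊓ Submodule.span Λ {D.y * D.x} = ⊥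
       ∧ Submodule.span Λ {D.z} ⊔ Submodule.span Λ {D.y * D.x} = D.U 0 0 1)
    ∧ (∀ a b c : k, (a, b, c) ≠ (0, 0, 0) → (a + b ≠ 0 ∨ a * c ≠ 0) →
        D.U a b c = Submodule.span Λ {D.w a b c}
        ∧ IsIndecomposable Λ ↥(D.U a b c)) := by
  refine ⟨?_, ⟨D.inf_bot_1, D.sup_1⟩, ⟨D.inf_bot_2, D.sup_2⟩, ?_⟩
  · intro U
    constructor
    · intro h
      obtain ⟨a, b, c, hne, hUe⟩ := D.dim3_classify hq U h
      exact ⟨a, b, c, by simpa [Prod.ext_iff, and_assoc] using hne, hUe⟩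
    · rintro ⟨a, b, c, hne, rfl⟩
      exact D.finrank_U (by simpa [Prod.ext_iff, and_assoc] using hne)
  · intro a b c hne hcond
    have habc : ¬(a = 0 ∧ b = 0 ∧ c = 0) := by
      simpa [Prod.ext_iff, and_assoc] using hne
    exact ⟨D.U_cyclic hq hcond, D.U_indec hq habc hcond⟩
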